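/- With u_1 = ε, u_{n+1} = (u_n x_n)^(+), and h_n = ψ_{x_1}⋯ψ_{x_n}(x_{n+1}), one has u_{n+1} = h_{n-1} h_{n-2} ⋯ h_1 h_0 = \bar{h_0} \bar{h_1} ⋯ \bar{h_{n-1}} for all n ≥ 1, where \bar{w} denotes the reversal of w. -/

import Mathlib

variable {A : Type*} [DecidableEq A]

/-- `psiW a` is the morphism with `ψ_a(a) = a` and `ψ_a(x) = ax` for `x ≠ a`. -/
def psiW (a : A) (w : List A) : List A :=
  w.flatMap (fun b => if b = a then [a] else [a, b])

/-- `muW x n = ψ_{x 1} ∘ ⋯ ∘ ψ_{x n}`. -/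
def muW (x : ℕ → A) : ℕ → List A → List A
  | 0 => id
  | n + 1 => fun w => muW x n (psiW (x (n + 1)) w)

/-- `hW x n = μ_n (x_{n+1})`. -/
def hW (x : ℕ → A) (n : ℕ) : List A := muW x n [x (n + 1)]

/-- `p` is the palindromic right-closure of `w`: the shortest palindrome having `w`
as a prefix. -/
def IsPalClosure (w p : List A) : Prop :=
  w <+: p ∧ p.reverse = p ∧
    ∀ q : List A, w <+: q → q.reverse = q → p.length ≤ q.length

/-- The finite word `w` is a prefix of the infinite word `s`. -/
def PrefInf (w : List A) (s : ℕ → A) : Prop :=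
  ∀ i : ℕ, ∀ h : i < w.length, w[i] = s i

/-- Number of occurrences (positions) of `w` as a factor of `v`. -/
def occ (w v : List A) : ℕ :=
  (List.range (v.length + 1)).countP
    (fun i => decide (i + w.length ≤ v.length ∧ (v.drop i).take w.length = w))

/-- `cat z k = z 1 ++ z 2 ++ ⋯ ++ z k`. -/
def cat (z : ℕ → List A) (k : ℕ) : List A := ((List.range' 1 k).map z).flatten

/-- `z` is the Ziv-Lempel factorization of the infinite word `s`: each `z m` is
the shortest prefix of `z m · z (m+1) ⋯` occurring only once in `z 1 ⋯ z m`. -/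
def IsZFact (s : ℕ → A) (z : ℕ → List A) : Prop :=
  ∀ m : ℕ, 1 ≤ m → z m ≠ [] ∧ PrefInf (cat z m) s ∧
    occ (z m) (cat z m) = 1 ∧
    ∀ p : List A, p <+: z m → p ≠ z m → 2 ≤ occ p (cat z m)

/-- `c` is the Crochemore factorization of the infinite word `s`: each `c m` is
either a fresh letter, or the longest prefix of `c m · c (m+1) ⋯` occurring
twice in `c 1 ⋯ c m`. -/
def IsCFact (s : ℕ → A) (c : ℕ → List A) : Prop :=
  ∀ m : ℕ, 1 ≤ m → c m ≠ [] ∧ PrefInf (cat c m) s ∧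
    ((∃ a : A, c m = [a] ∧ a ∉ cat c (m - 1)) ∨
      (2 ≤ occ (c m) (cat c m) ∧
        occ (c m ++ [s (cat c m).length]) (cat c m ++ [s (cat c m).length]) = 1))

lemma psiW_nil (b : A) : psiW b ([] : List A) = [] := rfl

lemma psiW_cons (b c : A) (m : List A) :
    psiW b (c :: m) = (if c = b then [b] else [b, c]) ++ psiW b m := rfl

lemma psiW_append (b : A) (u v : List A) :
    psiW b (u ++ v) = psiW b u ++ psiW b v := List.flatMap_append

lemma length_psiW_reverse (b : A) (w : List A) :
    (psiW b w.reverse).length = (psiW b w).length := by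
  induction w with
  | nil => rfl
  | cons c m ih =>
    rw [List.reverse_cons, psiW_append, psiW_cons]
    simp only [List.length_append, ih]
    simp [psiW, psiW_nil]
    omega

lemma psiW_eq_cons (b : A) (m : List A) (hm : m ≠ []) :
    ∃ l, psiW b m = b :: l := by
  cases m with
  | nil => exact absurd rfl hm
  | cons c m =>
    by_cases h : c = b <;> simp [psiW_cons, h]

lemma psiW_reverse_append (b : A) (t : List A) :
    (psiW b t ++ [b]).reverse = psiW b t.reverse ++ [b] := by
  induction t with
  | nil => rfl
  | cons c m ih =>
    have e1 : (psiW b (c :: m) ++ [b]).reverse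
        = (psiW b m ++ [b]).reverse ++ (if c = b then [b] else [b, c]).reverse := by
      rw [psiW_cons]; simp [List.reverse_append]
    rw [e1, ih, List.reverse_cons, psiW_append]
    by_cases h : c = b <;> simp [h, psiW_cons, psiW_nil]

lemma psiW_inj (b : A) : ∀ t t' : List A, psiW b t = psiW b t' → t = t' := by
  intro t
  induction t with
  | nil =>
    intro t' h
    cases t' with
    | nil => rfl
    | cons c' m' =>
      exfalso
      rw [psiW_nil, psiW_cons] at h
      by_cases h2 : c' = b <;> simp [h2] at h
  | cons c m ih =>
    intro t' h
    cases t' with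
    | nil =>
      exfalso
      rw [psiW_nil, psiW_cons] at h
      by_cases h2 : c = b <;> simp [h2] at h
    | cons c' m' =>
      rw [psiW_cons, psiW_cons] at h
      by_cases h1 : c = b <;> by_cases h2 : c' = b
      · simp [h1, h2] at h
        rw [h1, h2, ih _ h]
      · simp [h1, h2] at h
        -- h : psiW b m = c' :: psiW b m'
        exfalso
        obtain ⟨l, hl⟩ := psiW_eq_cons b m (by rintro rfl; simp [psiW_nil] at h)
        rw [hl] at h
        exact h2 (by injection h with h' _; exact h'.symm)
      · simp [h1, h2] at h
        exfalso
        obtain ⟨l, hl⟩ := psiW_eq_cons b m' (by rintro rfl; simp [psiW_nil] at h)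
        rw [hl] at h
        injection h with h' h''
        exact h1 h'
      · simp [h1, h2] at h
        rw [h.1, ih _ h.2]

lemma psiW_palindrome_iff (b : A) (t : List A) :
    (psiW b t ++ [b]).reverse = psiW b t ++ [b] ↔ t.reverse = t := by
  constructor
  · intro h
    rw [psiW_reverse_append] at h
    exact psiW_inj b _ _ (List.append_cancel_right h)
  · intro h
    rw [psiW_reverse_append, h]

omit [DecidableEq A] in
lemma suffix_split {u s X Y : List A} (h : u ++ s = X ++ Y)
    (hle : s.length ≤ Y.length) : s <:+ Y := by
  have hXu : X.length ≤ u.length := by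
    have := congrArg List.length h
    simp only [List.length_append] at this
    omega
  refine ⟨u.drop X.length, ?_⟩
  have h1 : List.drop X.length (u ++ s) = List.drop X.length (X ++ Y) := by rw [h]
  rw [List.drop_append_of_le_length hXu, List.drop_left] at h1
  exact h1

/-- Every nonempty palindromic suffix of `ψ_b(p) ++ [b]` is `ψ_b(t) ++ [b]` for a
palindromic suffix `t` of `p`. -/
lemma pal_suffix_psiW_b (b : A) :
    ∀ (p s : List A), s <:+ psiW b p ++ [b] → s ≠ [] → s.reverse = s →
      ∃ t, t <:+ p ∧ t.reverse = t ∧ s = psiW b t ++ [b] := by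
  intro p
  induction p with
  | nil =>
    intro s hs hne hpal
    rw [psiW_nil, List.nil_append] at hs
    refine ⟨[], List.nil_suffix, rfl, ?_⟩
    rw [psiW_nil, List.nil_append]
    rcases hs with ⟨u, hu⟩
    cases u with
    | nil => simpa using hu
    | cons d u' =>
      exfalso
      have hl := congrArg List.length hu
      simp only [List.length_append, List.length_cons, List.length_nil] at hl
      exact hne (List.length_eq_zero_iff.mp (by omega))
  | cons c m ih =>
    intro s hs hne hpal
    obtain ⟨u, hu⟩ := hs
    rw [psiW_cons, List.append_assoc] at hu
    by_cases hlen : s.length ≤ (psiW b m ++ [b]).length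
    · have hs' : s <:+ psiW b m ++ [b] := suffix_split hu hlen
      obtain ⟨t, ht1, ht2, ht3⟩ := ih s hs' hne hpal
      exact ⟨t, ht1.trans (List.suffix_cons _ _), ht2, ht3⟩
    · -- s is longer than psiW b m ++ [b]; u is shorter than the block
      have hulen : u.length < (if c = b then [b] else [b, c]).length := by
        have := congrArg List.length hu
        simp only [List.length_append] at this hlen
        omega
      by_cases hc : c = b
      · -- block = [b], so u = []
        rw [if_pos hc] at hu hulen
        have hu0 : u = [] := List.length_eq_zero_iff.mp (by simpa using Nat.lt_one_iff.mp hulen)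
        subst hu0
        rw [List.nil_append] at hu
        refine ⟨c :: m, List.suffix_refl _, ?_, ?_⟩
        · rw [← psiW_palindrome_iff b]
          rw [psiW_cons, if_pos hc, List.append_assoc]
          rw [← hu]
          exact hpal
        · rw [psiW_cons, if_pos hc, List.append_assoc, ← hu]
      · rw [if_neg hc] at hu hulen
        -- u = [] or u = [b]
        cases u with
        | nil =>
          rw [List.nil_append] at hu
          refine ⟨c :: m, List.suffix_refl _, ?_, ?_⟩
          · rw [← psiW_palindrome_iff b]
            rw [psiW_cons, if_neg hc, List.append_assoc]
            rw [← hu]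
            exact hpal
          · rw [psiW_cons, if_neg hc, List.append_assoc, ← hu]
        | cons d u' =>
          exfalso
          have hu'0 : u' = [] := by
            have := congrArg List.length hu
            simp only [List.length_append, List.length_cons] at this
            have : u'.length = 0 := by simp only [List.length_cons, List.length_nil] at hulen; omega
            exact List.length_eq_zero_iff.mp this
          subst hu'0
          -- hu : [d] ++ s = [b, c] ++ ...
          have hd : d = b := by
            have := congrArg (fun l => l.head?) hu
            simpa using this
          have hsc : s = c :: (psiW b m ++ [b]) := by
            have := congrArg List.tail hu
            simpa using this
          -- s palindrome with head c and last b, c ≠ b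
          have h1 : s.getLast? = some b := by
            rw [hsc]
            rw [show c :: (psiW b m ++ [b]) = (c :: psiW b m) ++ [b] by simp]
            exact List.getLast?_concat
          have h2 : s.head? = some c := by rw [hsc]; rfl
          rw [← List.head?_reverse, hpal, h2] at h1
          exact hc (by injection h1)

/-- Every nonempty palindromic suffix of `ψ_b(p)` not ending with `b` is
`tail (ψ_b t)` for a nonempty palindromic suffix `t` of `p`. -/
lemma pal_suffix_psiW (b : A) :
    ∀ (p s : List A), s <:+ psiW b p → s.reverse = s → s ≠ [] →
      s.getLast? ≠ some b →
      ∃ t, t <:+ p ∧ t.reverse = t ∧ t ≠ [] ∧ b :: s = psiW b t := by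
  intro p
  induction p with
  | nil =>
    intro s hs _ hne _
    rw [psiW_nil] at hs
    exact absurd (List.suffix_nil.mp hs) hne
  | cons c m ih =>
    intro s hs hpal hne hlast
    obtain ⟨u, hu⟩ := hs
    rw [psiW_cons] at hu
    by_cases hlen : s.length ≤ (psiW b m).length
    · obtain ⟨t, ht1, ht2, ht3, ht4⟩ := ih s (suffix_split hu hlen) hpal hne hlast
      exact ⟨t, ht1.trans (List.suffix_cons _ _), ht2, ht3, ht4⟩
    · have hulen : u.length < (if c = b then [b] else [b, c]).length := by
        have := congrArg List.length hu
        simp only [List.length_append] at this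
        omega
      have hheadb : ¬ (s.head? = some b) := by
        intro hh
        exact hlast (by rw [← List.head?_reverse, hpal]; exact hh)
      by_cases hc : c = b
      · exfalso
        rw [if_pos hc] at hu hulen
        have hu0 : u = [] := List.length_eq_zero_iff.mp (by simpa using Nat.lt_one_iff.mp hulen)
        subst hu0
        rw [List.nil_append] at hu
        exact hheadb (by rw [hu]; rfl)
      · rw [if_neg hc] at hu hulen
        cases u with
        | nil =>
          exfalso
          rw [List.nil_append] at hu
          exact hheadb (by rw [hu]; rfl)
        | cons d u' =>
          have hu'0 : u' = [] := by
            have := congrArg List.length hu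
            simp only [List.length_append, List.length_cons, List.length_nil] at this hulen hlen
            exact List.length_eq_zero_iff.mp (by omega)
          subst hu'0
          have hd : d = b := by
            have := congrArg (fun l => l.head?) hu
            simpa using this
          have hsc : s = c :: psiW b m := by
            have := congrArg List.tail hu
            simpa using this
          refine ⟨c :: m, List.suffix_refl _, ?_, by simp, ?_⟩
          · rw [← psiW_palindrome_iff b, psiW_cons, if_neg hc]
            have : [b, c] ++ psiW b m ++ [b] = [b] ++ (s ++ [b]) := by
              rw [hsc]; simp
            rw [this]
            simp only [List.reverse_append, List.reverse_cons, List.reverse_nil,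
              List.nil_append, hpal]
            simp [List.reverse_append, hpal]
          · rw [psiW_cons, if_neg hc, hsc]; rfl

omit [DecidableEq A] in
lemma pal_prefix_decomp {w q : List A} (hpre : w <+: q) (hpal : q.reverse = q)
    (hlen : q.length ≤ 2 * w.length) :
    q = w ++ (w.take (q.length - w.length)).reverse := by
  obtain ⟨r, rfl⟩ := hpre
  have hrw : r.length ≤ w.length := by
    have := congrArg List.length (rfl : w ++ r = w ++ r)
    simp only [List.length_append] at hlen
    omega
  have e2 : r.reverse = w.take r.length := by
    have h1 : r.reverse = ((w ++ r).reverse).take r.length := by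
      rw [List.reverse_append, List.take_append_of_le_length (by simp)]
      simp
    rw [hpal] at h1
    rw [h1, List.take_append_of_le_length hrw]
  have e3 : r = (w.take r.length).reverse := by
    rw [← e2, List.reverse_reverse]
  have hl : (w ++ r).length - w.length = r.length := by simp
  rw [hl, ← e3]

omit [DecidableEq A] in
lemma pal_suffix_of_pal_prefix {w q : List A} (hpre : w <+: q) (hpal : q.reverse = q)
    (hlen : q.length ≤ 2 * w.length) :
    (w.drop (q.length - w.length)).reverse = w.drop (q.length - w.length) := by
  have hd := pal_prefix_decomp hpre hpal hlen
  set k := q.length - w.length with hk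
  have e1 : q = (w.take k ++ w.drop k) ++ (w.take k).reverse := by
    rw [List.take_append_drop]; exact hd
  have e2 : q = w.take k ++ ((w.drop k).reverse ++ (w.take k).reverse) := by
    conv_lhs => rw [← hpal]
    rw [e1]
    simp [List.reverse_append]
  have key := e2.symm.trans e1
  rw [List.append_assoc] at key
  have key2 := List.append_cancel_left key
  exact List.append_cancel_right key2

omit [DecidableEq A] in
lemma pal_extend_of_pal_suffix {w t : List A} (ht : t <:+ w) (htpal : t.reverse = t) :
    ∃ q : List A, w <+: q ∧ q.reverse = q ∧ q.length = 2 * w.length - t.length := by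
  obtain ⟨v, rfl⟩ := ht
  refine ⟨v ++ t ++ v.reverse, ⟨v.reverse, rfl⟩, ?_, ?_⟩
  · simp [List.reverse_append, htpal]
  · simp [List.length_append]
    omega

lemma psiW_length_bound (b a : A) {p P t : List A}
    (hcl : IsPalClosure (p ++ [a]) P) (ht : t <:+ p ++ [a]) (htpal : t.reverse = t) :
    (psiW b P).length + (psiW b t).length ≤ 2 * (psiW b (p ++ [a])).length := by
  set w' := p ++ [a] with hw'
  obtain ⟨q, hq1, hq2, hq3⟩ := pal_extend_of_pal_suffix ht htpal
  have htle : t.length ≤ w'.length := ht.length_le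
  have hPle : P.length ≤ 2 * w'.length - t.length := by
    have h := hcl.2.2 q hq1 hq2
    rw [hq3] at h
    exact h
  have hwle : w'.length ≤ P.length := hcl.1.length_le
  have hP2 : P.length ≤ 2 * w'.length := by omega
  have hd := pal_prefix_decomp hcl.1 hcl.2.1 hP2
  set k := P.length - w'.length with hk
  have hwk : k + t.length ≤ w'.length := by omega
  have e1 : (psiW b P).length = (psiW b w').length + (psiW b (w'.take k)).length := by
    rw [hd, psiW_append, List.length_append, length_psiW_reverse]
  have ht2 : t <:+ w'.drop k := by
    obtain ⟨v, hv⟩ := ht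
    exact suffix_split
      (show v ++ t = w'.take k ++ w'.drop k by rw [List.take_append_drop]; exact hv)
      (by rw [List.length_drop]; omega)
  obtain ⟨mm, hmm⟩ := ht2
  have e2 : (psiW b w').length
      = (psiW b (w'.take k)).length + ((psiW b mm).length + (psiW b t).length) := by
    conv_lhs => rw [← List.take_append_drop k w', ← hmm]
    rw [psiW_append, psiW_append, List.length_append, List.length_append]
  omega

lemma main_step (b a : A) {p P : List A}
    (hcl : IsPalClosure (p ++ [a]) P) :
    IsPalClosure ((psiW b p ++ [b]) ++ [a]) (psiW b P ++ [b]) := by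
  obtain ⟨hpre, hPpal, hmin⟩ := hcl
  have hclfull : IsPalClosure (p ++ [a]) P := ⟨hpre, hPpal, hmin⟩
  obtain ⟨r, hr⟩ := hpre
  have hpsia : psiW b [a] = if a = b then [b] else [b, a] := by
    rw [psiW_cons, psiW_nil, List.append_nil]
  refine ⟨?_, (psiW_palindrome_iff b P).mpr hPpal, ?_⟩
  · -- prefix
    rw [← hr, psiW_append, psiW_append, hpsia]
    by_cases hab : a = b
    · rw [if_pos hab, hab]
      cases r with
      | nil => exact ⟨[], by simp [psiW_nil]⟩
      | cons c r' =>
        obtain ⟨l, hl⟩ := psiW_eq_cons b (c :: r') (by simp)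
        rw [hl]
        exact ⟨l ++ [b], by simp⟩
    · rw [if_neg hab]
      exact ⟨psiW b r ++ [b], by simp⟩
  · intro q hq hqpal
    set w : List A := (psiW b p ++ [b]) ++ [a] with hw
    have hWlen : w.length = (psiW b p).length + 2 := by simp [hw]
    have hqlen : w.length ≤ q.length := hq.length_le
    have hpsialen : 1 ≤ (psiW b [a]).length ∧ (psiW b [a]).length ≤ 2 := by
      rw [hpsia]; split <;> simp
    have hpsiaplen : (psiW b (p ++ [a])).length
        = (psiW b p).length + (psiW b [a]).length := by
      rw [psiW_append, List.length_append]
    have hgoal : (psiW b P ++ [b]).length = (psiW b P).length + 1 := by simp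
    rw [hgoal]
    by_cases hbig : 2 * w.length ≤ q.length
    · have hB := psiW_length_bound b a hclfull ⟨p, rfl⟩ (by simp)
      omega
    · push_neg at hbig
      set s := w.drop (q.length - w.length) with hs
      have hspal : s.reverse = s := pal_suffix_of_pal_prefix hq hqpal (by omega)
      have hslen : s.length = 2 * w.length - q.length := by
        rw [hs, List.length_drop]; omega
      have hsne : s ≠ [] := by
        intro h0
        rw [h0] at hslen
        simp at hslen
        omega
      have hssuf : s <:+ w := List.drop_suffix _ _
      by_cases hab : a = b
      · have hw2 : w = psiW b (p ++ [a]) ++ [b] := by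
          rw [hw, psiW_append, hpsia, if_pos hab, hab]
        obtain ⟨t, htsuf, htpal, hts⟩ :=
          pal_suffix_psiW_b b (p ++ [a]) s (hw2 ▸ hssuf) hsne hspal
        have hB := psiW_length_bound b a hclfull htsuf htpal
        have hslen2 : s.length = (psiW b t).length + 1 := by rw [hts]; simp
        have hww : w.length = (psiW b (p ++ [a])).length + 1 := by rw [hw2]; simp
        omega
      · have hw3 : w = psiW b (p ++ [a]) := by
          rw [hw, psiW_append, hpsia, if_neg hab]
          simp
        have hlastw : w.getLast? = some a := by
          rw [hw]; exact List.getLast?_concat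
        have hlast : s.getLast? ≠ some b := by
          obtain ⟨us, hus⟩ := hssuf
          rw [← hus, List.getLast?_append_of_ne_nil us hsne] at hlastw
          rw [hlastw]
          intro hcon
          exact hab (by injection hcon)
        obtain ⟨t, htsuf, htpal, htne, hts⟩ :=
          pal_suffix_psiW b (p ++ [a]) s (hw3 ▸ hssuf) hspal hsne hlast
        have hB := psiW_length_bound b a hclfull htsuf htpal
        have hslen2 : (psiW b t).length = s.length + 1 := by
          rw [← hts]; simp
        have hww : w.length = (psiW b (p ++ [a])).length := by rw [hw3]
        omega

omit [DecidableEq A] in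
lemma pal_getElem {l : List A} (hl : l.reverse = l) (i : ℕ) (h : i < l.length) :
    l[i] = l[l.length - 1 - i]'(by omega) := by
  have h2 : l.reverse[i]'(by simpa using h) = l[i] := by
    simp only [hl]
  rw [← h2, List.getElem_reverse]

omit [DecidableEq A] in
lemma palClosure_unique {w p q : List A} (hp : IsPalClosure w p)
    (hq : IsPalClosure w q) : p = q := by
  have hlen : p.length = q.length :=
    le_antisymm (hp.2.2 q hq.1 hq.2.1) (hq.2.2 p hp.1 hp.2.1)
  have hple : p.length ≤ 2 * w.length := by
    have := hp.2.2 (w ++ w.reverse) ⟨w.reverse, rfl⟩ (by simp)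
    simp at this
    omega
  have hwp : w.length ≤ p.length := hp.1.length_le
  have hkey : ∀ (m : ℕ) (hm : m < w.length) (h1 : m < p.length) (h2 : m < q.length),
      p[m] = q[m] := by
    intro m hm h1 h2
    rw [← hp.1.getElem hm, ← hq.1.getElem hm]
  apply List.ext_getElem hlen
  intro n h1 h2
  by_cases hn : n < w.length
  · exact hkey n hn h1 h2
  · push_neg at hn
    rw [pal_getElem hp.2.1 n h1, pal_getElem hq.2.1 n h2]
    have hidx : q.length - 1 - n = p.length - 1 - n := by omega
    simp only [← hlen]
    exact hkey (p.length - 1 - n) (by omega) (by omega) (by omega)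

def PalP (x : ℕ → A) (n : ℕ) : List A := ((List.range n).reverse.map (hW x)).flatten

lemma muW_succ (x : ℕ → A) (n : ℕ) (w : List A) :
    muW x (n + 1) w = muW x n (psiW (x (n + 1)) w) := rfl

lemma muW_shift (x : ℕ → A) :
    ∀ (n : ℕ) (w : List A),
      muW x (n + 1) w = psiW (x 1) (muW (fun k => x (k + 1)) n w) := by
  intro n
  induction n with
  | zero => intro w; rfl
  | succ m ih =>
    intro w
    rw [muW_succ, ih (psiW (x (m + 2)) w)]
    rfl

lemma hW_zero (x : ℕ → A) : hW x 0 = [x 1] := rfl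

lemma hW_shift (x : ℕ → A) (i : ℕ) :
    hW x (i + 1) = psiW (x 1) (hW (fun k => x (k + 1)) i) := by
  unfold hW
  rw [muW_shift]

lemma PalP_zero (x : ℕ → A) : PalP x 0 = [] := rfl

lemma PalP_cons (x : ℕ → A) (n : ℕ) : PalP x (n + 1) = hW x n ++ PalP x n := by
  unfold PalP
  rw [List.range_succ, List.reverse_append]
  simp

lemma PalP_one (x : ℕ → A) : PalP x 1 = [x 1] := by
  rw [PalP_cons, PalP_zero, hW_zero, List.append_nil]

lemma PalP_shift (x : ℕ → A) :
    ∀ n : ℕ, PalP x (n + 1) = psiW (x 1) (PalP (fun k => x (k + 1)) n) ++ [x 1] := by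
  intro n
  induction n with
  | zero => rw [PalP_one, PalP_zero, psiW_nil, List.nil_append]
  | succ m ih =>
    rw [PalP_cons, hW_shift, ih, PalP_cons, psiW_append, List.append_assoc]

lemma justin (n : ℕ) : ∀ (x : ℕ → A), (PalP x n).reverse = PalP x n ∧
    IsPalClosure (PalP x n ++ [x (n + 1)]) (PalP x (n + 1)) := by
  induction n with
  | zero =>
    intro x
    refine ⟨rfl, ?_⟩
    rw [PalP_zero, PalP_one, List.nil_append]
    exact ⟨List.prefix_refl _, rfl, fun q hq _ => hq.length_le⟩
  | succ m ih =>
    intro x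
    obtain ⟨hpal, hcl⟩ := ih (fun k => x (k + 1))
    constructor
    · rw [PalP_shift]
      exact (psiW_palindrome_iff (x 1) _).mpr hpal
    · rw [PalP_shift, PalP_shift]
      exact main_step (x 1) (x (m + 2)) hcl

theorem u_eq_prod_h (x : ℕ → A) (u : ℕ → List A) (hu1 : u 1 = [])
    (hu : ∀ n : ℕ, 1 ≤ n → IsPalClosure (u n ++ [x n]) (u (n + 1))) :
    ∀ n : ℕ, 1 ≤ n →
      u (n + 1) = ((List.range n).reverse.map (hW x)).flatten ∧
      u (n + 1) = ((List.range n).map (fun i => (hW x i).reverse)).flatten := by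
  have key : ∀ n : ℕ, u (n + 1) = PalP x n := by
    intro n
    induction n with
    | zero => rw [PalP_zero]; exact hu1
    | succ m ihm =>
      have h1 := hu (m + 1) (by omega)
      rw [ihm] at h1
      exact palClosure_unique h1 (justin m x).2
  intro n _
  have hpal := (justin n x).1
  refine ⟨key n, ?_⟩
  rw [key n, ← hpal]
  simp only [PalP, List.reverse_flatten, List.map_map, List.map_reverse,
    List.reverse_reverse]
  rfl
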